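/- arXiv:q-alg/9709043 — 2 statements merged into one kernel-verified Lean document; each statement's English description precedes it below -/
import Mathlib

section
/- Let ⋆ be a differential star-product on ℝ^{2n} quantizing the standard symplectic structure, and let c = Σ_{k≥0} ℏ^k c_k be a Hochschild 2-cochain (each c_k a bidifferential operator, extended ℂ[[ℏ]]-bilinearly) with b̃c = 0, whose leading term is a bivector field: c_0(f,g) = Σ_{j,k} w^{jk} ∂_j f ∂_k g with smooth functions satisfying w^{jk} = −w^{kj}. Then c_0 is a 2-cocycle for the Poisson bracket: for all smooth f,g,h, {f, c_0(g,h)} + {g, c_0(h,f)} + {h, c_0(f,g)} = c_0({f,g}, h) + c_0({g,h}, f) + c_0({h,f}, g) (equivalently, the Schouten bracket [π, c_0] vanishes). -/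
/-!  Common definitions: formal Weyl algebras, Moyal products, Weyl-bundle valued
differential forms on ℝ^{2n}, Fedosov connections, star-products on smooth functions,
multidifferential operators and Hochschild coboundaries.  -/

noncomputable section
namespace StarPaper

open scoped BigOperators

/-! ### Formal power series in y -/

/-- The fiber coefficient ring `ℂ[[y^1, …, y^N]]`. -/
abbrev Wc (N : ℕ) := MvPowerSeries (Fin N) ℂ

/-- Build a formal power series from its coefficient function. -/
def Wc.mk {N : ℕ} (f : (Fin N →₀ ℕ) → ℂ) : Wc N := f

/-- Formal partial derivative `∂/∂y^i` on `ℂ[[y]]`. -/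
def yD {N : ℕ} (i : Fin N) (a : Wc N) : Wc N :=
  Wc.mk fun β => ((β i : ℂ) + 1) * MvPowerSeries.coeff (R := ℂ) (β + Finsupp.single i 1) a

/-- Formal iterated partial derivative `∂^α` on `ℂ[[y]]`. -/
def yDM {N : ℕ} (α : Fin N →₀ ℕ) (a : Wc N) : Wc N :=
  Wc.mk fun β =>
    (∏ i : Fin N, (((β i + α i).factorial : ℂ) / ((β i).factorial : ℂ))) *
      MvPowerSeries.coeff (R := ℂ) (β + α) a

/-- Iterated derivatives along a tuple of directions. -/
def iterD {R : Type*} {N : ℕ} (D : Fin N → R → R) : {k : ℕ} → (Fin k → Fin N) → R → R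
  | 0, _, a => a
  | _ + 1, v, a => D (v 0) (iterD D (fun t => v t.succ) a)

/-- The `k`-th term of the Moyal–Weyl product for a constant matrix `π`:
`((-iℏ/2)^k/k!) Σ π^{i₁j₁}⋯π^{i_kj_k} (∂^k a/∂y^{i₁}⋯) (∂^k b/∂y^{j₁}⋯)`. -/
def moyalTerm {R : Type*} [CommRing R] [Module ℂ R] {N : ℕ}
    (D : Fin N → R → R) (π : Matrix (Fin N) (Fin N) ℂ) (k : ℕ) (a b : R) : R :=
  ((-Complex.I / 2) ^ k / (Nat.factorial k : ℂ)) •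
    ∑ i : Fin k → Fin N, ∑ j : Fin k → Fin N,
      (∏ t, π (i t) (j t)) • (iterD D i a * iterD D j b)

/-- Moyal product on formal power series `Σ_m ℏ^m F_m` (coefficients `F : ℕ → R`). -/
def moyalN {R : Type*} [CommRing R] [Module ℂ R] {N : ℕ} (D : Fin N → R → R)
    (π : Matrix (Fin N) (Fin N) ℂ) (F G : ℕ → R) : ℕ → R :=
  fun m => ∑ k ∈ Finset.range (m + 1), ∑ l ∈ Finset.range (m - k + 1),
    moyalTerm D π k (F l) (G (m - k - l))

/-- Moyal product on formal Laurent series `Σ_m ℏ^m F_m` (coefficients `F : ℤ → R`);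
the sum over contributions is finite for series bounded below in `ℏ`-degree. -/
def moyalZ {R : Type*} [CommRing R] [Module ℂ R] {N : ℕ} (D : Fin N → R → R)
    (π : Matrix (Fin N) (Fin N) ℂ) (F G : ℤ → R) : ℤ → R :=
  fun m => ∑ᶠ p : ℕ × ℤ, moyalTerm D π p.1 (F p.2) (G (m - p.1 - p.2))

/-- Moyal term for an `ℏ`-dependent matrix `π(ℏ) = π₀ + ℏπ₁`: the part of the `k`-th
Moyal term in which the product of matrix entries contributes `ℏ^d`. -/
def moyalTermH {R : Type*} [CommRing R] [Module ℂ R] {N : ℕ} (D : Fin N → R → R)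
    (π0 π1 : Matrix (Fin N) (Fin N) ℂ) (k d : ℕ) (a b : R) : R :=
  ((-Complex.I / 2) ^ k / (Nat.factorial k : ℂ)) •
    ∑ i : Fin k → Fin N, ∑ j : Fin k → Fin N,
      (∑ T ∈ Finset.univ.powerset.filter (fun T : Finset (Fin k) => T.card = d),
          (∏ t ∈ T, π1 (i t) (j t)) * ∏ t ∈ Tᶜ, π0 (i t) (j t)) •
        (iterD D i a * iterD D j b)

/-- Moyal product built from the `ℏ`-dependent matrix `π(ℏ) = π₀ + ℏπ₁`. -/
def moyalNH {R : Type*} [CommRing R] [Module ℂ R] {N : ℕ} (D : Fin N → R → R)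
    (π0 π1 : Matrix (Fin N) (Fin N) ℂ) (F G : ℕ → R) : ℕ → R :=
  fun m => ∑ k ∈ Finset.range (m + 1), ∑ d ∈ Finset.range (m - k + 1),
    ∑ l ∈ Finset.range (m - k - d + 1),
      moyalTermH D π0 π1 k d (F l) (G (m - k - d - l))

/-- The standard Poisson matrix `π` on `ℝ^{2n}` (inverse of the standard symplectic
matrix `ω`, normalized by `Σ_m ω_{jm} π^{mn} = δ_j^n`). -/
def stdPi (n : ℕ) : Matrix (Fin (2 * n)) (Fin (2 * n)) ℂ :=
  Matrix.of fun i j =>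
    if (i : ℕ) + n = (j : ℕ) then 1 else if (j : ℕ) + n = (i : ℕ) then -1 else 0

/-- The standard symplectic matrix `ω_{ij}`. -/
def stdOmega (n : ℕ) : Matrix (Fin (2 * n)) (Fin (2 * n)) ℂ := -stdPi n

/-! ### The formal Weyl algebra `W = ℂ[[y,ℏ]]` -/

/-- The formal Weyl algebra as `ℏ`-coefficient sequences. -/
abbrev Wa (N : ℕ) := ℕ → Wc N

/-- Moyal–Weyl product on `W` for a constant matrix `π`. -/
def wmulPi {N : ℕ} (π : Matrix (Fin N) (Fin N) ℂ) (a b : Wa N) : Wa N := moyalN yD π a b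

/-- Moyal–Weyl product on `W` for the standard symplectic Poisson matrix. -/
def wmul {n : ℕ} (a b : Wa (2 * n)) : Wa (2 * n) := wmulPi (stdPi n) a b

/-- The unit `1 ∈ W`. -/
def oneW (N : ℕ) : Wa N := fun m => if m = 0 then 1 else 0

/-- Scalar multiplication by a formal power series `s ∈ ℂ[[ℏ]]` (given by its
coefficients `s : ℕ → ℂ`). -/
def hsmul {N : ℕ} (s : ℕ → ℂ) (a : Wa N) : Wa N :=
  fun m => ∑ l ∈ Finset.range (m + 1), s l • a (m - l)

/-- The operator `E = -(i/2) Σ_j y^j ∂/∂y^j` on `ℂ[[y]]`. -/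
def EulW {N : ℕ} (a : Wc N) : Wc N :=
  Wc.mk fun β => -Complex.I / 2 * (∑ i : Fin N, (β i : ℂ)) * MvPowerSeries.coeff (R := ℂ) β a

/-- `E` on the Weyl algebra, acting on each `ℏ`-coefficient. -/
def EulWa {N : ℕ} (a : Wa N) : Wa N := fun m => EulW (a m)

/-- Termwise derivative `∂/∂ℏ`. -/
def hD {N : ℕ} (a : Wa N) : Wa N := fun m => (((m + 1 : ℕ) : ℂ)) • a (m + 1)

/-- Multiplication by `ℏ`. -/
def hM {N : ℕ} (a : Wa N) : Wa N := fun m => match m with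
  | 0 => 0
  | Nat.succ m' => a m'

/-- Division by `ℏ` (exact on elements divisible by `ℏ`; discards the constant term). -/
def hInv {N : ℕ} (a : Wa N) : Wa N := fun m => a (m + 1)

/-- The `ℏ`-derivative of the Moyal–Weyl product structure:
`c₁(a,b) = ∂(a⋆b)/∂ℏ − (∂a/∂ℏ)⋆b − a⋆(∂b/∂ℏ)`. -/
def c1W {n : ℕ} (a b : Wa (2 * n)) : Wa (2 * n) :=
  hD (wmul a b) - wmul (hD a) b - wmul a (hD b)

/-! ### W-valued differential forms on ℝ^{2n} -/

/-- Points of `ℝ^{2n}`. -/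
abbrev Pt (n : ℕ) := Fin (2 * n) → ℝ

/-- `W`-valued exterior forms on `ℝ^{2n}`: the component at a finite index set
`S = {j₁ < ⋯ < j_q}` is the coefficient of `dx^{j₁} ∧ ⋯ ∧ dx^{j_q}`. -/
abbrev WF (n : ℕ) := Finset (Fin (2 * n)) → Pt n → Wa (2 * n)

/-- Sign `(-1)^{#{j ∈ S, j < i}}` for inserting `dx^i` in front of `dx^S`. -/
def insSign {N : ℕ} (S : Finset (Fin N)) (i : Fin N) : ℂ :=
  (-1) ^ (S.filter fun j => j < i).card

/-- Koszul sign for merging `dx^{S₁} ∧ dx^{S₂}` into increasing order. -/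
def shuffleSign {N : ℕ} (S1 S2 : Finset (Fin N)) : ℂ :=
  (-1) ^ ((S1 ×ˢ S2).filter fun p => p.2 < p.1).card

/-- `∂/∂y^i` on the Weyl algebra. -/
def yDa {N : ℕ} (i : Fin N) (w : Wa N) : Wa N := fun m => yD i (w m)

/-- The operator `δ a = Σ_i dx^i ∧ ∂a/∂y^i`. -/
def deltaW {n : ℕ} (a : WF n) : WF n :=
  fun S x => ∑ i ∈ S, insSign S i • yDa i (a (S.erase i) x)

/-- The partial derivative `∂/∂x^i` of a `W`-valued function, taken coefficientwise. -/
def xD {n : ℕ} (i : Fin (2 * n)) (f : Pt n → Wa (2 * n)) (x : Pt n) : Wa (2 * n) :=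
  fun m => Wc.mk fun β =>
    fderiv ℝ (fun x' => MvPowerSeries.coeff (R := ℂ) β (f x' m)) x (Pi.single i 1)

/-- The exterior derivative `d a = Σ_i dx^i ∧ ∂a/∂x^i` on `W`-valued forms. -/
def extD {n : ℕ} (a : WF n) : WF n :=
  fun S x => ∑ i ∈ S, insSign S i • xD i (a (S.erase i)) x

/-- The product on `W`-valued forms: Moyal–Weyl product combined with wedge product. -/
def wMulF {n : ℕ} (a b : WF n) : WF n :=
  fun S x => ∑ S1 ∈ S.powerset, shuffleSign S1 (S \ S1) • wmul (a S1 x) (b (S \ S1) x)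

/-- Graded commutator `[r, a] = r⋆a − (−1)^{|a|} a⋆r` with a form `r` of degree 1. -/
def comm1 {n : ℕ} (r a : WF n) : WF n :=
  fun S x => wMulF r a S x - (-1 : ℂ) ^ (S.card - 1) • wMulF a r S x

/-- Graded commutator `[u, a] = u⋆a − a⋆u` with a form `u` of even degree. -/
def commE {n : ℕ} (u a : WF n) : WF n := fun S x => wMulF u a S x - wMulF a u S x

/-- The connection `D = −δ + d + (i/ℏ)[r, ·]` determined by a `W`-valued 1-form `r`. -/
def fedD {n : ℕ} (r a : WF n) : WF n :=
  fun S x => -deltaW a S x + extD a S x + Complex.I • hInv (comm1 r a S x)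

/-- A `W`-valued form has smooth coefficients. -/
def WF.Smooth {n : ℕ} (a : WF n) : Prop :=
  ∀ S m β, ContDiff ℝ (⊤ : ℕ∞) fun x => MvPowerSeries.coeff (R := ℂ) β (a S x m)

/-- A `W`-valued form is homogeneous of form-degree `q`. -/
def isForm {n : ℕ} (q : ℕ) (a : WF n) : Prop := ∀ S, S.card ≠ q → a S = 0

/-- A `W`-valued form is scalar: all coefficients are independent of the `y` variables. -/
def isScalar {n : ℕ} (a : WF n) : Prop :=
  ∀ S x m β, β ≠ 0 → MvPowerSeries.coeff (R := ℂ) β (a S x m) = 0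

/-- The constant standard symplectic 2-form `ω = (1/2) Σ ω_{ij} dx^i ∧ dx^j`. -/
def omegaF (n : ℕ) : WF n :=
  fun S _ m =>
    if m = 0 then
      MvPowerSeries.C (σ := Fin (2 * n)) (R := ℂ)
        (∑ i : Fin (2 * n), ∑ j : Fin (2 * n),
          if i < j ∧ S = {i, j} then stdOmega n i j else 0)
    else 0

/-- The curvature `Ω = ω + δr − dr − (i/ℏ) r⋆r` of the connection `−δ + d + (i/ℏ)[r,·]`. -/
def curv {n : ℕ} (r : WF n) : WF n :=
  fun S x => omegaF n S x + deltaW r S x - extD r S x - Complex.I • hInv (wMulF r r S x)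

/-- The operator `δ⁻¹`, acting as `(1/(p+q)) Σ_k y^k ι_k` on the part of `y`-degree `p`
and form-degree `q` (and as `0` for `p = q = 0`). -/
def deltaInv {n : ℕ} (a : WF n) : WF n :=
  fun S x m => Wc.mk fun β =>
    ((((β.sum fun _ e => e) + S.card : ℕ) : ℂ))⁻¹ *
      ∑ k : Fin (2 * n),
        if k ∉ S ∧ 1 ≤ β k then
          insSign S k * MvPowerSeries.coeff (R := ℂ) (β - Finsupp.single k 1) (a (insert k S) x m)
        else 0

/-! ### x-independent W-valued exterior forms (the graded algebra W⊗Λ) -/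

/-- `W`-valued exterior forms with constant coefficients. -/
abbrev WL (n : ℕ) := Finset (Fin (2 * n)) → Wa (2 * n)

/-- `δ` on `W ⊗ Λ`. -/
def deltaWL {n : ℕ} (a : WL n) : WL n :=
  fun S => ∑ i ∈ S, insSign S i • yDa i (a (S.erase i))

/-- Product (Moyal combined with wedge) on `W ⊗ Λ`. -/
def wMulL {n : ℕ} (a b : WL n) : WL n :=
  fun S => ∑ S1 ∈ S.powerset, shuffleSign S1 (S \ S1) • wmul (a S1) (b (S \ S1))

/-- `E` on `W ⊗ Λ`, acting on the `W`-coefficients. -/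
def EulL {n : ℕ} (a : WL n) : WL n := fun S => EulWa (a S)

/-- The `W`-valued 1-form `Σ_{i,j} ω_{ij} y^i dx^j`. -/
def oydxW (n : ℕ) : WL n :=
  fun S m =>
    if m = 0 then
      ∑ j : Fin (2 * n),
        (if S = {j} then ∑ i : Fin (2 * n), stdOmega n i j • MvPowerSeries.X i else 0)
    else 0

/-- The 1-form `K₀ = −(Er − iℏ ∂r/∂ℏ + i r + (i/2) Σ ω_{ij} y^i dx^j)`. -/
def K0 {n : ℕ} (r : WF n) : WF n :=
  fun S x =>
    -(EulWa (r S x) - Complex.I • hM (hD (r S x)) + Complex.I • r S x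
      + (Complex.I / 2) • oydxW n S)

/-- The quantum Liouville-type operator `ρ(u) = (ℏ/i) ∂u/∂ℏ + E u`. -/
def rhoW {n : ℕ} (u : WF n) : WF n :=
  fun S x m => (-Complex.I * (m : ℂ)) • u S x m + EulW (u S x m)

/-- `c₁` extended to `W`-valued forms. -/
def c1F {n : ℕ} (a b : WF n) : WF n :=
  fun S x => ∑ S1 ∈ S.powerset, shuffleSign S1 (S \ S1) • c1W (a S1 x) (b (S \ S1) x)

/-! ### The Laurent (ℏ-inverted) Weyl algebra and forms -/

/-- The extended Weyl algebra `W⁺ = ℂ[[y]][ℏ⁻¹,ℏ]]` as `ℏ`-coefficient sequences. -/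
abbrev WaZ (N : ℕ) := ℤ → Wc N

/-- Moyal–Weyl product on `W⁺` for a constant matrix `π`. -/
def wmulZPi {N : ℕ} (π : Matrix (Fin N) (Fin N) ℂ) (a b : WaZ N) : WaZ N := moyalZ yD π a b

/-- Moyal–Weyl product on `W⁺` for the standard symplectic Poisson matrix. -/
def wmulZ {n : ℕ} (a b : WaZ (2 * n)) : WaZ (2 * n) := wmulZPi (stdPi n) a b

/-- `W⁺`-valued exterior forms on `ℝ^{2n}`. -/
abbrev WFZ (n : ℕ) := Finset (Fin (2 * n)) → Pt n → WaZ (2 * n)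

/-- `∂/∂y^i` on `W⁺`. -/
def yDaZ {N : ℕ} (i : Fin N) (w : WaZ N) : WaZ N := fun m => yD i (w m)

/-- `δ` on `W⁺`-valued forms. -/
def deltaZ {n : ℕ} (a : WFZ n) : WFZ n :=
  fun S x => ∑ i ∈ S, insSign S i • yDaZ i (a (S.erase i) x)

/-- `∂/∂x^i` on `W⁺`-valued functions. -/
def xDZ {n : ℕ} (i : Fin (2 * n)) (f : Pt n → WaZ (2 * n)) (x : Pt n) : WaZ (2 * n) :=
  fun m => Wc.mk fun β =>
    fderiv ℝ (fun x' => MvPowerSeries.coeff (R := ℂ) β (f x' m)) x (Pi.single i 1)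

/-- Exterior derivative on `W⁺`-valued forms. -/
def extDZ {n : ℕ} (a : WFZ n) : WFZ n :=
  fun S x => ∑ i ∈ S, insSign S i • xDZ i (a (S.erase i)) x

/-- Product on `W⁺`-valued forms. -/
def wMulZF {n : ℕ} (a b : WFZ n) : WFZ n :=
  fun S x => ∑ S1 ∈ S.powerset, shuffleSign S1 (S \ S1) • wmulZ (a S1 x) (b (S \ S1) x)

/-- Graded commutator with a 1-form, on `W⁺`-valued forms. -/
def comm1Z {n : ℕ} (r a : WFZ n) : WFZ n :=
  fun S x => wMulZF r a S x - (-1 : ℂ) ^ (S.card - 1) • wMulZF a r S x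

/-- Division by `ℏ` on `W⁺` (exact: a shift of Laurent coefficients). -/
def shiftZ {N : ℕ} (a : WaZ N) : WaZ N := fun m => a (m + 1)

/-- The connection `D = −δ + d + (i/ℏ)[r,·]` on `W⁺`-valued forms. -/
def fedDZ {n : ℕ} (r a : WFZ n) : WFZ n :=
  fun S x => -deltaZ a S x + extDZ a S x + Complex.I • shiftZ (comm1Z r a S x)

/-- Termwise `∂/∂ℏ` on `W⁺`. -/
def hDZ {N : ℕ} (a : WaZ N) : WaZ N := fun m => ((m + 1 : ℤ) : ℂ) • a (m + 1)

/-- `∂/∂ℏ` on `W⁺`-valued forms. -/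
def hDZF {n : ℕ} (a : WFZ n) : WFZ n := fun S x => hDZ (a S x)

/-- `E` on `W⁺`. -/
def EulZ {N : ℕ} (a : WaZ N) : WaZ N := fun m => EulW (a m)

/-- `E` on `W⁺`-valued forms. -/
def EulZF {n : ℕ} (a : WFZ n) : WFZ n := fun S x => EulZ (a S x)

/-- `c₁` on `W⁺`. -/
def c1Za {n : ℕ} (a b : WaZ (2 * n)) : WaZ (2 * n) :=
  hDZ (wmulZ a b) - wmulZ (hDZ a) b - wmulZ a (hDZ b)

/-- `c₁` on `W⁺`-valued forms. -/
def c1ZF {n : ℕ} (a b : WFZ n) : WFZ n :=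
  fun S x => ∑ S1 ∈ S.powerset, shuffleSign S1 (S \ S1) • c1Za (a S1 x) (b (S \ S1) x)

/-- Smoothness of the coefficients of a `W⁺`-valued form. -/
def WFZ.Smooth {n : ℕ} (a : WFZ n) : Prop :=
  ∀ S m β, ContDiff ℝ (⊤ : ℕ∞) fun x => MvPowerSeries.coeff (R := ℂ) β (a S x m)

/-- Homogeneity of form-degree `q` for `W⁺`-valued forms. -/
def isFormZ {n : ℕ} (q : ℕ) (a : WFZ n) : Prop := ∀ S, S.card ≠ q → a S = 0

/-- A `W⁺`-valued form has power series coefficients (no negative powers of `ℏ`). -/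
def PSupp {n : ℕ} (a : WFZ n) : Prop := ∀ S x m, m < 0 → a S x m = 0

/-- A Laurent series is bounded below in `ℏ`-degree. -/
def BddZ {α : Type*} [Zero α] (f : ℤ → α) : Prop :=
  ∃ N : ℕ, ∀ m : ℤ, m < -(N : ℤ) → f m = 0

/-! ### Smooth functions and star-products on ℝ^N -/

/-- Complex-valued functions on `ℝ^N`. -/
abbrev SmFn (N : ℕ) := (Fin N → ℝ) → ℂ

/-- Partial derivative `∂/∂x^i` of a (smooth) function. -/
def xDf {N : ℕ} (i : Fin N) (f : SmFn N) : SmFn N := fun x => fderiv ℝ f x (Pi.single i 1)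

/-- Iterated partial derivative `∂^α`. -/
def xDfM {N : ℕ} (α : Fin N →₀ ℕ) (f : SmFn N) : SmFn N :=
  (List.finRange N).foldr (fun i g => (xDf i)^[α i] g) f

/-- Formal power series with function coefficients: `C^∞(ℝ^N,ℂ)[[ℏ]]`. -/
abbrev SmSer (N : ℕ) := ℕ → SmFn N

/-- Formal Laurent series with function coefficients: `C^∞(ℝ^N,ℂ)[ℏ⁻¹,ℏ]]`. -/
abbrev SmLau (N : ℕ) := ℤ → SmFn N

/-- All coefficients of a series are smooth. -/
def SmSer.Smooth {N : ℕ} (F : SmSer N) : Prop := ∀ m, ContDiff ℝ (⊤ : ℕ∞) (F m)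

/-- All coefficients of a Laurent series are smooth. -/
def SmLau.Smooth {N : ℕ} (F : SmLau N) : Prop := ∀ m, ContDiff ℝ (⊤ : ℕ∞) (F m)

/-- The Moyal star-product on `C^∞(ℝ^N,ℂ)[[ℏ]]` for a constant matrix `π`. -/
def fMul {N : ℕ} (π : Matrix (Fin N) (Fin N) ℂ) (F G : SmSer N) : SmSer N :=
  moyalN xDf π F G

/-- The Moyal star-product on Laurent series. -/
def fMulZ {N : ℕ} (π : Matrix (Fin N) (Fin N) ℂ) (F G : SmLau N) : SmLau N :=
  moyalZ xDf π F G

/-- The Moyal star-product with `ℏ`-dependent matrix `π(ℏ) = π₀ + ℏπ₁`. -/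
def fMulH {N : ℕ} (π0 π1 : Matrix (Fin N) (Fin N) ℂ) (F G : SmSer N) : SmSer N :=
  moyalNH xDf π0 π1 F G

/-- The constant series `1`. -/
def oneSer (N : ℕ) : SmSer N := fun m => if m = 0 then (fun _ => 1) else 0

/-- The standard Poisson bracket `{f,g} = Σ π^{ij} ∂_i f ∂_j g` on `ℝ^{2n}`. -/
def pb (n : ℕ) (f g : SmFn (2 * n)) : SmFn (2 * n) :=
  fun x => ∑ i, ∑ j, stdPi n i j * xDf i f x * xDf j g x

/-! ### Multidifferential operators and star-products -/

/-- A `k`-multidifferential operator on `C^∞(ℝ^N,ℂ)`: a finite sum of terms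
`u(x) (∂^{α₁}f₁)⋯(∂^{α_k}f_k)`, recorded by its finitely many coefficients. -/
abbrev MDOp (N k : ℕ) := (Fin k → (Fin N →₀ ℕ)) →₀ SmFn N

/-- Action of a multidifferential operator. -/
def MDOp.app {N k : ℕ} (c : MDOp N k) (f : Fin k → SmFn N) : SmFn N :=
  fun x => c.sum fun T u => u x * ∏ t, xDfM (T t) (f t) x

/-- A multidifferential operator has smooth coefficients. -/
def MDOp.Smooth {N k : ℕ} (c : MDOp N k) : Prop := ∀ T, ContDiff ℝ (⊤ : ℕ∞) (c T)

/-- A family of bidifferential operators `C_k`, extended `ℂ[[ℏ]]`-bilinearly: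
`F ⋆ G = Σ ℏ^{k+l+l'} C_k(F_l, G_{l'})`. -/
def starN {N : ℕ} (C : ℕ → MDOp N 2) (F G : SmSer N) : SmSer N :=
  fun m => ∑ k ∈ Finset.range (m + 1), ∑ l ∈ Finset.range (m - k + 1),
    MDOp.app (C k) ![F l, G (m - k - l)]

/-- The `ℂ[ℏ⁻¹,ℏ]]`-bilinear extension of a star-product to Laurent series. -/
def starZ {N : ℕ} (C : ℕ → MDOp N 2) (F G : SmLau N) : SmLau N :=
  fun m => ∑ᶠ p : ℕ × ℤ, MDOp.app (C p.1) ![F p.2, G (m - p.1 - p.2)]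

/-- Action of a Laurent cochain `c = Σ_l ℏ^l c_l` of multidifferential operators
on a `k`-tuple of Laurent series. -/
def lac {N k : ℕ} (cc : ℤ → MDOp N k) (u : Fin k → SmLau N) : SmLau N :=
  fun m => ∑ᶠ v : Fin k → ℤ, MDOp.app (cc (m - ∑ t, v t)) fun t => u t (v t)

/-- A differential star-product on `ℝ^{2n}` quantizing the standard symplectic
structure: `f ⋆ g = Σ ℏ^k C_k(f,g)` with `C_k` bidifferential, `C₀(f,g) = fg`,
`1` a unit, `⋆` associative, and `C₁(f,g) − C₁(g,f) = −i{f,g}`. -/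
structure DiffStar (n : ℕ) where
  C : ℕ → MDOp (2 * n) 2
  smooth : ∀ k, MDOp.Smooth (C k)
  C0 : ∀ f g : SmFn (2 * n), MDOp.app (C 0) ![f, g] = f * g
  unit_left : ∀ F : SmSer (2 * n), SmSer.Smooth F → starN C (oneSer (2 * n)) F = F
  unit_right : ∀ F : SmSer (2 * n), SmSer.Smooth F → starN C F (oneSer (2 * n)) = F
  assoc : ∀ F G H : SmSer (2 * n), SmSer.Smooth F → SmSer.Smooth G → SmSer.Smooth H →
    starN C (starN C F G) H = starN C F (starN C G H)
  C1skew : ∀ f g : SmFn (2 * n), ContDiff ℝ (⊤ : ℕ∞) f → ContDiff ℝ (⊤ : ℕ∞) g →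
    MDOp.app (C 1) ![f, g] - MDOp.app (C 1) ![g, f] = fun x => -Complex.I * pb n f g x

/-! ### Hochschild coboundary -/

/-- The Hochschild coboundary `b̃` of a `k`-cochain with respect to a product `mul`. -/
def hoch {A : Type*} [AddCommGroup A] (mul : A → A → A) {k : ℕ}
    (c : (Fin k → A) → A) : (Fin (k + 1) → A) → A :=
  fun u =>
    mul (u 0) (c fun t => u t.succ)
      + ∑ i : Fin k, ((-1 : ℤ) ^ ((i : ℕ) + 1)) •
          c (fun j => if (j : ℕ) < (i : ℕ) then u j.castSucc
            else if (j : ℕ) = (i : ℕ) then mul (u j.castSucc) (u j.succ)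
            else u j.succ)
      + ((-1 : ℤ) ^ (k + 1)) • mul (c fun t => u t.castSucc) (u (Fin.last k))

/-! ### Formal differential operators on ℂ[[y]] -/

/-- A formal `k`-differential operator on `ℂ[[y^1,…,y^N]]`:
`c(a₁,…,a_k) = Σ_T u^T (∂^{T 1}a₁)⋯(∂^{T k}a_k)` with coefficients
`u^T ∈ ℂ[[y]]` such that for each degree `d` only finitely many tuples `T` have a
coefficient containing a nonzero monomial of degree `≤ d`. -/
structure FDOp (N k : ℕ) where
  u : (Fin k → (Fin N →₀ ℕ)) → Wc N
  fin : ∀ d : ℕ,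
    {T : Fin k → (Fin N →₀ ℕ) | ∃ β : Fin N →₀ ℕ,
      (β.sum fun _ e => e) ≤ d ∧ MvPowerSeries.coeff (R := ℂ) β (u T) ≠ 0}.Finite

/-- Action of a formal differential operator (the defining sum converges in the
`y`-adic topology; each coefficient receives only finitely many contributions). -/
def FDOp.app {N k : ℕ} (P : FDOp N k) (a : Fin k → Wc N) : Wc N :=
  Wc.mk fun β => ∑ᶠ T : Fin k → (Fin N →₀ ℕ),
    MvPowerSeries.coeff (R := ℂ) β (P.u T * ∏ t, yDM (T t) (a t))

/-- Action of a Laurent cochain `c = Σ_l ℏ^l c_l` of formal differential operators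
on a `k`-tuple of elements of `W⁺`. -/
def flac {N k : ℕ} (cc : ℤ → FDOp N k) (a : Fin k → WaZ N) : WaZ N :=
  fun m => ∑ᶠ v : Fin k → ℤ, FDOp.app (cc (m - ∑ t, v t)) fun t => a t (v t)

/-! ### Flat sections, Taylor series and quantum exponential -/

/-- Fiberwise Taylor series of a smooth function at `x`. -/
def taylorW {N : ℕ} (f : SmFn N) (x : Fin N → ℝ) : Wc N :=
  Wc.mk fun β => (∏ i : Fin N, ((β i).factorial : ℂ))⁻¹ * xDfM β f x

/-- Sections of the Weyl bundle over `ℝ^{2n}` (W-valued 0-forms). -/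
abbrev Sect (n : ℕ) := Pt n → Wa (2 * n)

/-- The fiberwise Taylor lift of a series of smooth functions. -/
def taylorS {n : ℕ} (F : SmSer (2 * n)) : Sect n := fun x m => taylorW (F m) x

/-- A section has smooth coefficients. -/
def Sect.Smooth {n : ℕ} (u : Sect n) : Prop :=
  ∀ m β, ContDiff ℝ (⊤ : ℕ∞) fun x => MvPowerSeries.coeff (R := ℂ) β (u x m)

/-- A section is flat for `D = −δ + d`: its component equations read
`∂u/∂x^i = ∂u/∂y^i` for all `i`. -/
def Sect.Flat {n : ℕ} (u : Sect n) : Prop :=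
  ∀ (i : Fin (2 * n)) (x : Pt n), xD i u x = yDa i (u x)

/-- The symbol map `σ(u) = u|_{y=0}`. -/
def sigma {n : ℕ} (u : Sect n) : SmSer (2 * n) :=
  fun m x => MvPowerSeries.coeff (R := ℂ) 0 (u x m)

/-- Fiberwise Moyal–Weyl product of sections. -/
def wmulS {n : ℕ} (u v : Sect n) : Sect n := fun x => wmul (u x) (v x)

/-! ### Vector fields and Liouville-type operators -/

/-- Action of a vector field `X = Σ_j X^j ∂_j` on a function. -/
def XAct {N : ℕ} (X : Fin N → SmFn N) (f : SmFn N) : SmFn N :=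
  fun x => ∑ j, X j x * xDf j f x

/-- A smooth function viewed as a series concentrated in `ℏ`-degree `0`. -/
def embS {N : ℕ} (f : SmFn N) : SmSer N := fun m => if m = 0 then f else 0

/-- The Hochschild coboundary `b̃X(f,g) = f⋆(Xg) − X(f⋆g) + (Xf)⋆g` of a vector
field, for the Moyal star-product with constant matrix `π`. -/
def bXMoyal {N : ℕ} (π : Matrix (Fin N) (Fin N) ℂ) (X : Fin N → SmFn N)
    (f g : SmFn N) : SmSer N :=
  fMul π (embS f) (embS (XAct X g)) - (fun m => XAct X (fMul π (embS f) (embS g) m))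
    + fMul π (embS (XAct X f)) (embS g)

/-- The operator `ℏ ∂_ℏ + X` on `C^∞(ℝ^N,ℂ)[[ℏ]]`. -/
def LOp {N : ℕ} (X : Fin N → SmFn N) (F : SmSer N) : SmSer N :=
  fun m x => (m : ℂ) * F m x + XAct X (F m) x

/-- The derivative of a star-product with respect to `ℏ`:
`c(f,g) = Σ_{k≥1} k ℏ^{k-1} C_k(f,g)`, extended `ℂ[[ℏ]]`-bilinearly. -/
def dStar {N : ℕ} (C : ℕ → MDOp N 2) (F G : SmSer N) : SmSer N :=
  fun m => ∑ k ∈ Finset.Icc 1 (m + 1), (k : ℂ) •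
    ∑ l ∈ Finset.range (m + 1 - k + 1), MDOp.app (C k) ![F l, G (m + 1 - k - l)]

end StarPaper
namespace StarPaper


/-! ### Auxiliary lemmas -/

private lemma xDf_zero {N : ℕ} (i : Fin N) : xDf i (0 : SmFn N) = 0 := by
  funext x
  show fderiv ℝ (fun _ => (0 : ℂ)) x (Pi.single i 1) = 0
  rw [fderiv_fun_const]
  rfl

private lemma xDf_neg' {N : ℕ} (i : Fin N) (f : SmFn N) : xDf i (-f) = -xDf i f := by
  funext x
  show fderiv ℝ (fun y => -f y) x (Pi.single i 1) = -(fderiv ℝ f x (Pi.single i 1))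
  rw [fderiv_fun_neg]
  rfl

private lemma xDf_it_zero {N : ℕ} (i : Fin N) (k : ℕ) : (xDf i)^[k] (0 : SmFn N) = 0 := by
  induction k with
  | zero => rfl
  | succ k ih => rw [Function.iterate_succ_apply', ih, xDf_zero]

private lemma xDf_it_neg {N : ℕ} (i : Fin N) (k : ℕ) (f : SmFn N) :
    (xDf i)^[k] (-f) = -(xDf i)^[k] f := by
  induction k with
  | zero => rfl
  | succ k ih => rw [Function.iterate_succ_apply', ih, xDf_neg', Function.iterate_succ_apply']

private lemma xDfM_zero {N : ℕ} (α : Fin N →₀ ℕ) : xDfM α (0 : SmFn N) = 0 := by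
  unfold xDfM
  induction (List.finRange N) with
  | nil => rfl
  | cons i L ih => rw [List.foldr_cons, ih, xDf_it_zero]

private lemma xDfM_neg {N : ℕ} (α : Fin N →₀ ℕ) (f : SmFn N) : xDfM α (-f) = -xDfM α f := by
  unfold xDfM
  induction (List.finRange N) with
  | nil => rfl
  | cons i L ih => rw [List.foldr_cons, ih, xDf_it_neg, List.foldr_cons]

private lemma app2_zero_left {N : ℕ} (c : MDOp N 2) (g : SmFn N) :
    MDOp.app c ![0, g] = 0 := by
  funext x
  show (Finsupp.sum c fun T u => u x * ∏ t, xDfM (T t) (![(0 : SmFn N), g] t) x) = 0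
  rw [Finsupp.sum]
  apply Finset.sum_eq_zero
  intro T _
  simp [Fin.prod_univ_two, xDfM_zero]

private lemma app2_zero_right {N : ℕ} (c : MDOp N 2) (f : SmFn N) :
    MDOp.app c ![f, 0] = 0 := by
  funext x
  show (Finsupp.sum c fun T u => u x * ∏ t, xDfM (T t) (![f, (0 : SmFn N)] t) x) = 0
  rw [Finsupp.sum]
  apply Finset.sum_eq_zero
  intro T _
  simp [Fin.prod_univ_two, xDfM_zero]

private lemma app2_neg_left {N : ℕ} (c : MDOp N 2) (f g : SmFn N) :
    MDOp.app c ![-f, g] = -MDOp.app c ![f, g] := by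
  funext x
  show (Finsupp.sum c fun T u => u x * ∏ t, xDfM (T t) (![-f, g] t) x)
      = -(Finsupp.sum c fun T u => u x * ∏ t, xDfM (T t) (![f, g] t) x)
  rw [Finsupp.sum, Finsupp.sum, ← Finset.sum_neg_distrib]
  apply Finset.sum_congr rfl
  intro T _
  simp [Fin.prod_univ_two, xDfM_neg]

private lemma app2_neg_right {N : ℕ} (c : MDOp N 2) (f g : SmFn N) :
    MDOp.app c ![f, -g] = -MDOp.app c ![f, g] := by
  funext x
  show (Finsupp.sum c fun T u => u x * ∏ t, xDfM (T t) (![f, -g] t) x)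
      = -(Finsupp.sum c fun T u => u x * ∏ t, xDfM (T t) (![f, g] t) x)
  rw [Finsupp.sum, Finsupp.sum, ← Finset.sum_neg_distrib]
  apply Finset.sum_congr rfl
  intro T _
  simp [Fin.prod_univ_two, xDfM_neg]

private lemma contDiff_xDf {N : ℕ} {f : SmFn N} (hf : ContDiff ℝ (⊤ : ℕ∞) f) (i : Fin N) :
    ContDiff ℝ (⊤ : ℕ∞) (xDf i f) := by
  unfold xDf
  exact (hf.fderiv_right (by simp)).clm_apply contDiff_const

private lemma contDiff_xDf_it {N : ℕ} (i : Fin N) (k : ℕ) {f : SmFn N}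
    (hf : ContDiff ℝ (⊤ : ℕ∞) f) : ContDiff ℝ (⊤ : ℕ∞) ((xDf i)^[k] f) := by
  induction k with
  | zero => exact hf
  | succ k ih => rw [Function.iterate_succ_apply']; exact contDiff_xDf ih i

private lemma contDiff_xDfM {N : ℕ} (α : Fin N →₀ ℕ) {f : SmFn N}
    (hf : ContDiff ℝ (⊤ : ℕ∞) f) : ContDiff ℝ (⊤ : ℕ∞) (xDfM α f) := by
  unfold xDfM
  induction (List.finRange N) generalizing f with
  | nil => exact hf
  | cons i L ih => rw [List.foldr_cons]; exact contDiff_xDf_it i (α i) (ih hf)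

private lemma contDiff_app {N k : ℕ} {c : MDOp N k} (hc : MDOp.Smooth c)
    {fs : Fin k → SmFn N} (hfs : ∀ t, ContDiff ℝ (⊤ : ℕ∞) (fs t)) :
    ContDiff ℝ (⊤ : ℕ∞) (MDOp.app c fs) := by
  show ContDiff ℝ (⊤ : ℕ∞) fun x => ∑ T ∈ c.support, c T x * ∏ t, xDfM (T t) (fs t) x
  apply ContDiff.sum
  intro T _
  exact (hc T).mul (contDiff_prod fun t _ => contDiff_xDfM (T t) (hfs t))

private lemma smooth_pair {N : ℕ} {a b : SmFn N} (ha : ContDiff ℝ (⊤ : ℕ∞) a)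
    (hb : ContDiff ℝ (⊤ : ℕ∞) b) : ∀ t : Fin 2, ContDiff ℝ (⊤ : ℕ∞) (![a, b] t) := by
  intro t
  fin_cases t
  · simpa using ha
  · simpa using hb

private lemma contDiff_pb {n : ℕ} {a b : SmFn (2 * n)} (ha : ContDiff ℝ (⊤ : ℕ∞) a)
    (hb : ContDiff ℝ (⊤ : ℕ∞) b) : ContDiff ℝ (⊤ : ℕ∞) (pb n a b) := by
  unfold pb
  apply ContDiff.sum
  intro i _
  apply ContDiff.sum
  intro j _
  exact (contDiff_const.mul (contDiff_xDf ha i)).mul (contDiff_xDf hb j)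

/-- Let `⋆` be a differential star-product on `ℝ^{2n}` quantizing
the standard symplectic structure and let `c = Σ ℏ^k c_k` be a Hochschild 2-cocycle
of bidifferential operators whose leading term `c₀` is a bivector field
`c₀(f,g) = Σ w^{jk} ∂_j f ∂_k g` with `w^{jk} = −w^{kj}`.  Then `c₀` is a 2-cocycle
for the Poisson bracket. -/
theorem leading_term_poisson_cocycle (n : ℕ) (St : DiffStar n)
    (cc : ℕ → MDOp (2 * n) 2) (hsm : ∀ k, MDOp.Smooth (cc k))
    (w : Fin (2 * n) → Fin (2 * n) → SmFn (2 * n))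
    (hw : ∀ j k, ContDiff ℝ (⊤ : ℕ∞) (w j k)) (hskeww : ∀ j k, w k j = -w j k)
    (hc0 : ∀ f g : SmFn (2 * n),
      MDOp.app (cc 0) ![f, g] = fun x => ∑ j, ∑ k, w j k x * xDf j f x * xDf k g x)
    (hcoc : ∀ F G H : SmSer (2 * n), SmSer.Smooth F → SmSer.Smooth G → SmSer.Smooth H →
      starN St.C F (starN cc G H) - starN cc (starN St.C F G) H
        + starN cc F (starN St.C G H) - starN St.C (starN cc F G) H = 0) :
    ∀ f g h : SmFn (2 * n),
      ContDiff ℝ (⊤ : ℕ∞) f → ContDiff ℝ (⊤ : ℕ∞) g → ContDiff ℝ (⊤ : ℕ∞) h →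
      pb n f (MDOp.app (cc 0) ![g, h]) + pb n g (MDOp.app (cc 0) ![h, f])
          + pb n h (MDOp.app (cc 0) ![f, g]) =
        MDOp.app (cc 0) ![pb n f g, h] + MDOp.app (cc 0) ![pb n g h, f]
          + MDOp.app (cc 0) ![pb n h f, g] := by
  intro f g h hf hg hh
  classical
  -- smoothness of `embS`
  have embsm : ∀ u : SmFn (2 * n), ContDiff ℝ (⊤ : ℕ∞) u → SmSer.Smooth (embS u) := by
    intro u hu m
    unfold embS
    split
    · exact hu
    · exact contDiff_const
  -- computation of the star products on embedded functions
  have star00 : ∀ (C : ℕ → MDOp (2 * n) 2) (u v : SmFn (2 * n)),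
      starN C (embS u) (embS v) 0 = MDOp.app (C 0) ![u, v] := by
    intro C u v
    simp [starN, embS]
  have star01 : ∀ (C : ℕ → MDOp (2 * n) 2) (u v : SmFn (2 * n)),
      starN C (embS u) (embS v) 1 = MDOp.app (C 1) ![u, v] := by
    intro C u v
    simp [starN, embS, Finset.sum_range_succ, app2_zero_left, app2_zero_right]
  have starL1 : ∀ (C : ℕ → MDOp (2 * n) 2) (u : SmFn (2 * n)) (P : SmSer (2 * n)),
      starN C (embS u) P 1 = MDOp.app (C 0) ![u, P 1] + MDOp.app (C 1) ![u, P 0] := by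
    intro C u P
    simp [starN, embS, Finset.sum_range_succ, app2_zero_left]
  have starR1 : ∀ (C : ℕ → MDOp (2 * n) 2) (P : SmSer (2 * n)) (v : SmFn (2 * n)),
      starN C P (embS v) 1 = MDOp.app (C 0) ![P 1, v] + MDOp.app (C 1) ![P 0, v] := by
    intro C P v
    simp [starN, embS, Finset.sum_range_succ, app2_zero_right]
  -- the order-ℏ part of the cocycle identity
  have Ekey : ∀ u v p : SmFn (2 * n), ContDiff ℝ (⊤ : ℕ∞) u → ContDiff ℝ (⊤ : ℕ∞) v →
      ContDiff ℝ (⊤ : ℕ∞) p → ∀ x,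
      u x * MDOp.app (cc 1) ![v, p] x
        + MDOp.app (St.C 1) ![u, MDOp.app (cc 0) ![v, p]] x
        + MDOp.app (cc 0) ![u, MDOp.app (St.C 1) ![v, p]] x
        + MDOp.app (cc 1) ![u, v * p] x
      = MDOp.app (cc 0) ![MDOp.app (St.C 1) ![u, v], p] x
        + MDOp.app (cc 1) ![u * v, p] x
        + MDOp.app (cc 1) ![u, v] x * p x
        + MDOp.app (St.C 1) ![MDOp.app (cc 0) ![u, v], p] x := by
    intro u v p hu hv hp x
    have H := hcoc (embS u) (embS v) (embS p) (embsm u hu) (embsm v hv) (embsm p hp)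
    have H1 := congrFun (congrFun H 1) x
    simp only [Pi.sub_apply, Pi.add_apply, Pi.zero_apply] at H1
    rw [starL1 St.C u (starN cc (embS v) (embS p)),
        starR1 cc (starN St.C (embS u) (embS v)) p,
        starL1 cc u (starN St.C (embS v) (embS p)),
        starR1 St.C (starN cc (embS u) (embS v)) p,
        star01 cc v p, star00 cc v p, star01 St.C u v, star00 St.C u v,
        star01 St.C v p, star00 St.C v p, star01 cc u v, star00 cc u v] at H1
    simp only [St.C0, Pi.add_apply, Pi.mul_apply] at H1
    linear_combination H1
  -- skew-symmetry of c₀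
  have hskew : ∀ u v : SmFn (2 * n), MDOp.app (cc 0) ![u, v] = -MDOp.app (cc 0) ![v, u] := by
    intro u v
    rw [hc0, hc0]
    funext x
    simp only [Pi.neg_apply, ← Finset.sum_neg_distrib]
    rw [Finset.sum_comm]
    refine Finset.sum_congr rfl fun a _ => Finset.sum_congr rfl fun b _ => ?_
    rw [hskeww a b]
    simp only [Pi.neg_apply]
    ring
  -- linearity of c₀ in the first argument
  have hlin : ∀ u v p q : SmFn (2 * n), Differentiable ℝ v → Differentiable ℝ p →
      (∀ x, u x = v x + -Complex.I * p x) →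
      ∀ x, MDOp.app (cc 0) ![u, q] x
        = MDOp.app (cc 0) ![v, q] x + -Complex.I * MDOp.app (cc 0) ![p, q] x := by
    intro u v p q hv hp huv x
    have hx : ∀ j : Fin (2 * n), xDf j u x = xDf j v x + -Complex.I * xDf j p x := by
      intro j
      have hu : u = fun y => v y + -Complex.I * p y := funext huv
      show fderiv ℝ u x (Pi.single j 1) = _
      rw [hu, fderiv_fun_add (hv x) ((hp x).const_mul _), fderiv_const_mul (hp x)]
      simp [xDf]
    simp only [hc0]
    rw [Finset.mul_sum, ← Finset.sum_add_distrib]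
    refine Finset.sum_congr rfl fun j _ => ?_
    rw [Finset.mul_sum, ← Finset.sum_add_distrib]
    refine Finset.sum_congr rfl fun k _ => ?_
    rw [hx j]
    ring
  -- pointwise form of the skew-symmetry of C₁
  have hC1s : ∀ a b : SmFn (2 * n), ContDiff ℝ (⊤ : ℕ∞) a → ContDiff ℝ (⊤ : ℕ∞) b →
      ∀ x, MDOp.app (St.C 1) ![a, b] x
        = MDOp.app (St.C 1) ![b, a] x + -Complex.I * pb n a b x := by
    intro a b ha hb x
    have := congrFun (St.C1skew a b ha hb) x
    simp only [Pi.sub_apply] at this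
    linear_combination this
  have hdC1 : ∀ a b : SmFn (2 * n), ContDiff ℝ (⊤ : ℕ∞) a → ContDiff ℝ (⊤ : ℕ∞) b →
      Differentiable ℝ (MDOp.app (St.C 1) ![a, b]) := fun a b ha hb =>
    (contDiff_app (St.smooth 1) (smooth_pair ha hb)).differentiable (by simp)
  -- the six instances of the order-ℏ identity
  have e1 := Ekey f g h hf hg hh
  have e2 := Ekey g f h hg hf hh
  have e3 := Ekey h g f hh hg hf
  have e4 := Ekey f h g hf hh hg
  have e5 := Ekey g h f hg hh hf
  have e6 := Ekey h f g hh hf hg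
  -- canonicalisation
  have m1 : g * f = f * g := mul_comm g f
  have m2 : h * g = g * h := mul_comm h g
  have m3 : h * f = f * h := mul_comm h f
  have s_fh : MDOp.app (cc 0) ![f, h] = -MDOp.app (cc 0) ![h, f] := hskew f h
  have s_gf : MDOp.app (cc 0) ![g, f] = -MDOp.app (cc 0) ![f, g] := hskew g f
  have s_hg : MDOp.app (cc 0) ![h, g] = -MDOp.app (cc 0) ![g, h] := hskew h g
  have t1 := hskew f (MDOp.app (St.C 1) ![g, h])
  have t2 := hskew g (MDOp.app (St.C 1) ![f, h])
  have t3 := hskew h (MDOp.app (St.C 1) ![g, f])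
  have t4 := hskew f (MDOp.app (St.C 1) ![h, g])
  have t5 := hskew g (MDOp.app (St.C 1) ![h, f])
  have t6 := hskew h (MDOp.app (St.C 1) ![f, g])
  simp only [m1, m2, m3, s_fh, s_gf, s_hg, t1, t2, t3, t4, t5, t6,
    app2_neg_left, app2_neg_right, Pi.neg_apply] at e1 e2 e3 e4 e5 e6
  -- the C₁-skewness instances
  have k1 := hC1s f (MDOp.app (cc 0) ![g, h]) hf (contDiff_app (hsm 0) (smooth_pair hg hh))
  have k2 := hC1s g (MDOp.app (cc 0) ![h, f]) hg (contDiff_app (hsm 0) (smooth_pair hh hf))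
  have k3 := hC1s h (MDOp.app (cc 0) ![f, g]) hh (contDiff_app (hsm 0) (smooth_pair hf hg))
  -- the c₀-linearity instances
  have l1 := hlin (MDOp.app (St.C 1) ![f, g]) (MDOp.app (St.C 1) ![g, f]) (pb n f g) h
    (hdC1 g f hg hf) ((contDiff_pb hf hg).differentiable (by simp)) (hC1s f g hf hg)
  have l2 := hlin (MDOp.app (St.C 1) ![g, h]) (MDOp.app (St.C 1) ![h, g]) (pb n g h) f
    (hdC1 h g hh hg) ((contDiff_pb hg hh).differentiable (by simp)) (hC1s g h hg hh)
  have l3 := hlin (MDOp.app (St.C 1) ![h, f]) (MDOp.app (St.C 1) ![f, h]) (pb n h f) g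
    (hdC1 f h hf hh) ((contDiff_pb hh hf).differentiable (by simp)) (hC1s h f hh hf)
  funext x
  simp only [Pi.add_apply]
  linear_combination (Complex.I / 2) * (e1 x - e2 x - e3 x - e4 x + e5 x + e6 x)
    + (-Complex.I) * (k1 x + k2 x + k3 x) + Complex.I * (l1 x + l2 x + l3 x)
    + (pb n f (MDOp.app (cc 0) ![g, h]) x + pb n g (MDOp.app (cc 0) ![h, f]) x
        + pb n h (MDOp.app (cc 0) ![f, g]) x - MDOp.app (cc 0) ![pb n f g, h] x
        - MDOp.app (cc 0) ![pb n g h, f] x - MDOp.app (cc 0) ![pb n h f, g] x) * Complex.I_sq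


end StarPaper
end
end

section
/- Let (π^{ij}) be a constant antisymmetric 2n×2n complex matrix and X = Σ_j X^j ∂_j a vector field on ℝ^{2n} whose components X^j are polynomials of degree at most one, satisfying Σ_l ( π^{lk} ∂_l X^j + π^{jl} ∂_l X^k ) = π^{jk} for all j,k (i.e. X rescales the Poisson structure, as the classical Liouville vector field X = Σ_i p_i ∂/∂p_i does for the standard symplectic structure on ℝ^{2n} = T*ℝ^n). Then ℏ∂_ℏ + X is a quantum Liouville operator, i.e. a derivation of the Moyal star-product: (ℏ∂_ℏ + X)(F⋆G) = ((ℏ∂_ℏ + X)F)⋆G + F⋆((ℏ∂_ℏ + X)G) for all F,G ∈ C^∞(ℝ^{2n},ℂ)[[ℏ]]. -/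
/-!  Common definitions: formal Weyl algebras, Moyal products, Weyl-bundle valued
differential forms on ℝ^{2n}, Fedosov connections, star-products on smooth functions,
multidifferential operators and Hochschild coboundaries.  -/

noncomputable section
namespace StarPaper

set_option maxHeartbeats 1600000

section AuxDerivation
variable {N : ℕ}

private lemma cdtop {f : SmFn N} (hf : ContDiff ℝ (⊤:ℕ∞) f) (x : Fin N → ℝ) :
    DifferentiableAt ℝ f x := (hf.differentiable (by norm_cast)).differentiableAt

private lemma xDf_smooth {f : SmFn N} (hf : ContDiff ℝ (⊤:ℕ∞) f) (i : Fin N) :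
    ContDiff ℝ (⊤:ℕ∞) (xDf i f) :=
  (hf.fderiv_right (by norm_cast)).clm_apply contDiff_const

private lemma xDf_fun_add {f g : SmFn N} {x} (hf : DifferentiableAt ℝ f x)
    (hg : DifferentiableAt ℝ g x) (i : Fin N) :
    xDf i (fun y => f y + g y) x = xDf i f x + xDf i g x := by
  simp [xDf, fderiv_fun_add hf hg]

private lemma xDf_fun_sum {ι : Type*} (s : Finset ι) (f : ι → SmFn N) {x}
    (hf : ∀ a ∈ s, DifferentiableAt ℝ (f a) x) (i : Fin N) :
    xDf i (fun y => ∑ a ∈ s, f a y) x = ∑ a ∈ s, xDf i (f a) x := by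
  simp [xDf, fderiv_fun_sum hf]

private lemma xDf_const_mul {f : SmFn N} {x} (hf : DifferentiableAt ℝ f x) (c : ℂ) (i : Fin N) :
    xDf i (fun y => c * f y) x = c * xDf i f x := by
  simp [xDf, fderiv_const_mul hf c]

private lemma xDf_fun_mul {f g : SmFn N} {x} (hf : DifferentiableAt ℝ f x)
    (hg : DifferentiableAt ℝ g x) (i : Fin N) :
    xDf i (fun y => f y * g y) x = xDf i f x * g x + f x * xDf i g x := by
  simp [xDf, fderiv_fun_mul hf hg]; ring

private lemma xDf_comm {f : SmFn N} (hf : ContDiff ℝ (⊤:ℕ∞) f) (i j : Fin N) (x : Fin N → ℝ) :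
    xDf i (xDf j f) x = xDf j (xDf i f) x := by
  have hsymm : IsSymmSndFDerivAt ℝ f x :=
    (hf.contDiffAt).isSymmSndFDerivAt (by simp [minSmoothness_of_isRCLikeNormedField]; exact WithTop.coe_le_coe.mpr (le_top : (2:ℕ∞) ≤ ⊤))
  have hd : DifferentiableAt ℝ (fderiv ℝ f) x :=
    ((hf.fderiv_right (m := (⊤:ℕ∞)) (by norm_cast)).differentiable (by norm_cast)).differentiableAt
  have key : ∀ (k : Fin N) (v : Fin N → ℝ), xDf k (fun y => fderiv ℝ f y v) x
      = fderiv ℝ (fderiv ℝ f) x (Pi.single k 1) v := by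
    intro k v
    show fderiv ℝ (fun y => fderiv ℝ f y v) x (Pi.single k 1) = _
    rw [fderiv_clm_apply hd (differentiableAt_const v)]
    simp
  rw [show xDf j f = fun y => fderiv ℝ f y (Pi.single j 1) from rfl,
      show xDf i f = fun y => fderiv ℝ f y (Pi.single i 1) from rfl, key, key, hsymm]

private lemma XAct_smooth {X : Fin N → SmFn N} (hX : ∀ j, ContDiff ℝ (⊤:ℕ∞) (X j))
    {f : SmFn N} (hf : ContDiff ℝ (⊤:ℕ∞) f) : ContDiff ℝ (⊤:ℕ∞) (XAct X f) := by
  have : XAct X f = fun x => ∑ j, X j x * xDf j f x := rfl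
  rw [this]
  exact ContDiff.sum fun j _ => (hX j).mul (xDf_smooth hf j)

private lemma comm_xDf {X : Fin N → SmFn N} {b : Matrix (Fin N) (Fin N) ℂ}
    (hX : ∀ j, ContDiff ℝ (⊤:ℕ∞) (X j)) (hXd : ∀ j k x, xDf k (X j) x = b j k)
    {f : SmFn N} (hf : ContDiff ℝ (⊤:ℕ∞) f) (m : Fin N) (x : Fin N → ℝ) :
    xDf m (XAct X f) x = XAct X (xDf m f) x + ∑ j, b j m * xDf j f x := by
  have h1 : XAct X f = fun y => ∑ j, X j y * xDf j f y := rfl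
  rw [h1, xDf_fun_sum _ _ (fun j _ => ((hX j).mul (xDf_smooth hf j) |> cdtop) x) m]
  have h2 : ∀ j : Fin N, xDf m (fun y => X j y * xDf j f y) x
      = b j m * xDf j f x + X j x * xDf j (xDf m f) x := by
    intro j
    rw [xDf_fun_mul (cdtop (hX j) x) (cdtop (xDf_smooth hf j) x) m, hXd, xDf_comm hf m j]
  rw [Finset.sum_congr rfl (fun j _ => h2 j), Finset.sum_add_distrib, add_comm]
  rfl

private lemma iterD_zero {R : Type*} (D : Fin N → R → R) (v : Fin 0 → Fin N) (a : R) :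
    iterD D v a = a := rfl

private lemma iterD_succ {R : Type*} {k : ℕ} (D : Fin N → R → R) (v : Fin (k+1) → Fin N) (a : R) :
    iterD D v a = D (v 0) (iterD D (fun t => v t.succ) a) := rfl

private lemma iterD_smooth {f : SmFn N} (hf : ContDiff ℝ (⊤:ℕ∞) f) :
    ∀ {k : ℕ} (v : Fin k → Fin N), ContDiff ℝ (⊤:ℕ∞) (iterD xDf v f)
  | 0, _ => hf
  | k + 1, v => xDf_smooth (iterD_smooth hf (fun t => v t.succ)) (v 0)

private lemma comm_iterD {X : Fin N → SmFn N} {b : Matrix (Fin N) (Fin N) ℂ}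
    (hX : ∀ j, ContDiff ℝ (⊤:ℕ∞) (X j)) (hXd : ∀ j k x, xDf k (X j) x = b j k) :
    ∀ {k : ℕ} (v : Fin k → Fin N) {f : SmFn N} (hf : ContDiff ℝ (⊤:ℕ∞) f) (x : Fin N → ℝ),
    iterD xDf v (XAct X f) x = XAct X (iterD xDf v f) x
      + ∑ s : Fin k, ∑ j, b j (v s) * iterD xDf (Function.update v s j) f x := by
  intro k
  induction k with
  | zero => intro v f hf x; simp [iterD_zero]
  | succ k ih =>
    intro v f hf x
    set w : Fin k → Fin N := fun t => v t.succ with hw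
    have hIH : iterD xDf w (XAct X f) = fun y => XAct X (iterD xDf w f) y
        + ∑ s : Fin k, ∑ j, b j (w s) * iterD xDf (Function.update w s j) f y := by
      funext y; exact ih w hf y
    have hsm1 : ContDiff ℝ (⊤:ℕ∞) (XAct X (iterD xDf w f)) :=
      XAct_smooth hX (iterD_smooth hf w)
    have hsm2 : ∀ (s : Fin k) (j : Fin N),
        ContDiff ℝ (⊤:ℕ∞) (fun y => b j (w s) * iterD xDf (Function.update w s j) f y) :=
      fun s j => contDiff_const.mul (iterD_smooth hf _)
    rw [iterD_succ, hIH, xDf_fun_add (cdtop hsm1 x)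
        (DifferentiableAt.fun_sum fun s _ => DifferentiableAt.fun_sum fun j _ => cdtop (hsm2 s j) x)]
    rw [xDf_fun_sum _ _ (fun s _ => DifferentiableAt.fun_sum fun j _ => cdtop (hsm2 s j) x)]
    have hterm : ∀ s : Fin k, xDf (v 0) (fun y => ∑ j, b j (w s) * iterD xDf (Function.update w s j) f y) x
        = ∑ j, b j (v s.succ) * iterD xDf (Function.update v s.succ j) f x := by
      intro s
      rw [xDf_fun_sum _ _ (fun j _ => cdtop (hsm2 s j) x)]
      refine Finset.sum_congr rfl fun j _ => ?_
      rw [xDf_const_mul (cdtop (iterD_smooth hf _) x)]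
      congr 1
      have h0 : Function.update v s.succ j 0 = v 0 := by
        rw [Function.update_of_ne (Fin.succ_ne_zero s).symm]
      have htail : (fun t : Fin k => Function.update v s.succ j t.succ)
          = Function.update w s j := by
        funext t
        by_cases h : t = s
        · subst h; simp [Function.update_self]
        · rw [Function.update_of_ne (fun hc => h (Fin.succ_injective _ hc)),
            Function.update_of_ne h]
      rw [iterD_succ xDf (Function.update v s.succ j) f, h0, htail]
    rw [Finset.sum_congr rfl (fun s _ => hterm s)]
    have hcomm := comm_xDf hX hXd (iterD_smooth hf w) (v 0) x
    rw [hcomm]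
    have hfirst : ∀ j : Fin N, xDf j (iterD xDf w f) x = iterD xDf (Function.update v 0 j) f x := by
      intro j
      have h0 : Function.update v 0 j 0 = j := Function.update_self _ _ _
      have htail : (fun t : Fin k => Function.update v 0 j t.succ) = w := by
        funext t; rw [Function.update_of_ne (Fin.succ_ne_zero t)]
      rw [iterD_succ xDf (Function.update v 0 j) f, h0, htail]
    rw [Fin.sum_univ_succ (fun s : Fin (k+1) => ∑ j, b j (v s) * iterD xDf (Function.update v s j) f x)]
    rw [Finset.sum_congr rfl (fun j (_ : j ∈ Finset.univ) => by rw [hfirst j])]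
    have : XAct X (xDf (v 0) (iterD xDf w f)) = XAct X (iterD xDf v f) := rfl
    rw [this]
    ring

private lemma correction {N k : ℕ} (π b : Matrix (Fin N) (Fin N) ℂ)
    (hL : ∀ u v : Fin N, (∑ l, (π l v * b u l + π u l * b v l)) = π u v)
    (p q : (Fin k → Fin N) → ℂ) :
    (∑ i : Fin k → Fin N, ∑ j : Fin k → Fin N, (∏ t, π (i t) (j t)) *
        ((∑ s : Fin k, ∑ l, b l (i s) * p (Function.update i s l)) * q j))
    + (∑ i : Fin k → Fin N, ∑ j : Fin k → Fin N, (∏ t, π (i t) (j t)) *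
        (p i * (∑ s : Fin k, ∑ l, b l (j s) * q (Function.update j s l))))
    = (k : ℂ) * ∑ i : Fin k → Fin N, ∑ j : Fin k → Fin N,
        (∏ t, π (i t) (j t)) * (p i * q j) := by
  classical
  have reidx : ∀ (s : Fin k) (F : (Fin k → Fin N) → Fin N → ℂ),
      (∑ i : Fin k → Fin N, ∑ l : Fin N, F i l)
        = ∑ i : Fin k → Fin N, ∑ l : Fin N, F (Function.update i s l) (i s) := by
    intro s F
    have hinv : Function.Involutive
        (fun z : (Fin k → Fin N) × Fin N => (Function.update z.1 s z.2, z.1 s)) := by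
      intro z
      simp [Function.update_idem, Function.update_self, Function.update_eq_self]
    calc (∑ i : Fin k → Fin N, ∑ l : Fin N, F i l)
        = ∑ z : (Fin k → Fin N) × Fin N, F z.1 z.2 := (Fintype.sum_prod_type (f := fun z => F z.1 z.2)).symm
      _ = ∑ z : (Fin k → Fin N) × Fin N, F (Function.update z.1 s z.2) (z.1 s) :=
          Fintype.sum_bijective _ hinv.bijective _ _ (fun x => by
            simp [Function.update_idem, Function.update_self, Function.update_eq_self])
      _ = ∑ i : Fin k → Fin N, ∑ l : Fin N, F (Function.update i s l) (i s) :=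
          Fintype.sum_prod_type (f := fun z => F (Function.update z.1 s z.2) (z.1 s))
  have prod_upd : ∀ (s : Fin k) (i : Fin k → Fin N) (l : Fin N) (j : Fin k → Fin N),
      (∏ t, π (Function.update i s l t) (j t))
        = π l (j s) * ∏ t ∈ Finset.univ.erase s, π (i t) (j t) := by
    intro s i l j
    have h : (fun t => π (Function.update i s l t) (j t))
        = Function.update (fun t => π (i t) (j t)) s (π l (j s)) := by
      funext t
      by_cases h : t = s
      · subst h; simp
      · simp [Function.update_of_ne h]
    rw [h, Finset.prod_update_of_mem (Finset.mem_univ s)]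
    congr 1
    simp [Finset.sdiff_singleton_eq_erase]
  have prod_upd' : ∀ (s : Fin k) (i : Fin k → Fin N) (l : Fin N) (j : Fin k → Fin N),
      (∏ t, π (i t) (Function.update j s l t))
        = π (i s) l * ∏ t ∈ Finset.univ.erase s, π (i t) (j t) := by
    intro s i l j
    have h : (fun t => π (i t) (Function.update j s l t))
        = Function.update (fun t => π (i t) (j t)) s (π (i s) l) := by
      funext t
      by_cases h : t = s
      · subst h; simp
      · simp [Function.update_of_ne h]
    rw [h, Finset.prod_update_of_mem (Finset.mem_univ s)]
    congr 1
    simp [Finset.sdiff_singleton_eq_erase]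
  have key : ∀ s : Fin k,
      (∑ i : Fin k → Fin N, ∑ j : Fin k → Fin N, ∑ l : Fin N,
          (∏ t, π (i t) (j t)) * (b l (i s) * p (Function.update i s l) * q j))
      + (∑ i : Fin k → Fin N, ∑ j : Fin k → Fin N, ∑ l : Fin N,
          (∏ t, π (i t) (j t)) * (b l (j s) * p i * q (Function.update j s l)))
      = ∑ i : Fin k → Fin N, ∑ j : Fin k → Fin N, (∏ t, π (i t) (j t)) * (p i * q j) := by
    intro s
    have h1 : (∑ i : Fin k → Fin N, ∑ j : Fin k → Fin N, ∑ l : Fin N,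
          (∏ t, π (i t) (j t)) * (b l (i s) * p (Function.update i s l) * q j))
        = ∑ i : Fin k → Fin N, ∑ j : Fin k → Fin N, ∑ l : Fin N,
            (π l (j s) * b (i s) l) * ((∏ t ∈ Finset.univ.erase s, π (i t) (j t)) * (p i * q j)) := by
      rw [Finset.sum_comm]
      conv_rhs => rw [Finset.sum_comm]
      refine Finset.sum_congr rfl fun j _ => ?_
      refine ((reidx s fun i l =>
        (∏ t, π (i t) (j t)) * (b l (i s) * p (Function.update i s l) * q j)).trans ?_)
      refine Finset.sum_congr rfl fun i _ => Finset.sum_congr rfl fun l _ => ?_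
      simp only [Function.update_self, Function.update_idem, Function.update_eq_self, prod_upd]
      ring
    have h2 : (∑ i : Fin k → Fin N, ∑ j : Fin k → Fin N, ∑ l : Fin N,
          (∏ t, π (i t) (j t)) * (b l (j s) * p i * q (Function.update j s l)))
        = ∑ i : Fin k → Fin N, ∑ j : Fin k → Fin N, ∑ l : Fin N,
            (π (i s) l * b (j s) l) * ((∏ t ∈ Finset.univ.erase s, π (i t) (j t)) * (p i * q j)) := by
      refine Finset.sum_congr rfl fun i _ => ?_
      refine ((reidx s fun j l =>
        (∏ t, π (i t) (j t)) * (b l (j s) * p i * q (Function.update j s l))).trans ?_)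
      refine Finset.sum_congr rfl fun j _ => Finset.sum_congr rfl fun l _ => ?_
      simp only [Function.update_self, Function.update_idem, Function.update_eq_self, prod_upd']
      ring
    rw [h1, h2, ← Finset.sum_add_distrib]
    refine Finset.sum_congr rfl fun i _ => ?_
    rw [← Finset.sum_add_distrib]
    refine Finset.sum_congr rfl fun j _ => ?_
    rw [← Finset.sum_add_distrib]
    have : ∀ l, (π l (j s) * b (i s) l) * ((∏ t ∈ Finset.univ.erase s, π (i t) (j t)) * (p i * q j))
        + (π (i s) l * b (j s) l) * ((∏ t ∈ Finset.univ.erase s, π (i t) (j t)) * (p i * q j))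
        = (π l (j s) * b (i s) l + π (i s) l * b (j s) l) *
            ((∏ t ∈ Finset.univ.erase s, π (i t) (j t)) * (p i * q j)) := by
      intro l; ring
    rw [Finset.sum_congr rfl fun l _ => this l, ← Finset.sum_mul, hL (i s) (j s),
      ← mul_assoc, Finset.mul_prod_erase Finset.univ (fun t => π (i t) (j t)) (Finset.mem_univ s)]
  have flat1 : (∑ i : Fin k → Fin N, ∑ j : Fin k → Fin N, (∏ t, π (i t) (j t)) *
        ((∑ s : Fin k, ∑ l, b l (i s) * p (Function.update i s l)) * q j))
      = ∑ s : Fin k, ∑ i : Fin k → Fin N, ∑ j : Fin k → Fin N, ∑ l : Fin N,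
          (∏ t, π (i t) (j t)) * (b l (i s) * p (Function.update i s l) * q j) := by
    calc (∑ i : Fin k → Fin N, ∑ j : Fin k → Fin N, (∏ t, π (i t) (j t)) *
        ((∑ s : Fin k, ∑ l, b l (i s) * p (Function.update i s l)) * q j))
        = ∑ i : Fin k → Fin N, ∑ j : Fin k → Fin N, ∑ s : Fin k, ∑ l : Fin N,
          (∏ t, π (i t) (j t)) * (b l (i s) * p (Function.update i s l) * q j) := by
          refine Finset.sum_congr rfl fun i _ => Finset.sum_congr rfl fun j _ => ?_
          rw [Finset.sum_mul, Finset.mul_sum]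
          refine Finset.sum_congr rfl fun s _ => ?_
          rw [Finset.sum_mul, Finset.mul_sum]
          all_goals exact Finset.sum_congr rfl fun l _ => by ring
      _ = ∑ i : Fin k → Fin N, ∑ s : Fin k, ∑ j : Fin k → Fin N, ∑ l : Fin N,
          (∏ t, π (i t) (j t)) * (b l (i s) * p (Function.update i s l) * q j) :=
          Finset.sum_congr rfl fun i _ => Finset.sum_comm
      _ = ∑ s : Fin k, ∑ i : Fin k → Fin N, ∑ j : Fin k → Fin N, ∑ l : Fin N,
          (∏ t, π (i t) (j t)) * (b l (i s) * p (Function.update i s l) * q j) :=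
          Finset.sum_comm
  have flat2 : (∑ i : Fin k → Fin N, ∑ j : Fin k → Fin N, (∏ t, π (i t) (j t)) *
        (p i * (∑ s : Fin k, ∑ l, b l (j s) * q (Function.update j s l))))
      = ∑ s : Fin k, ∑ i : Fin k → Fin N, ∑ j : Fin k → Fin N, ∑ l : Fin N,
          (∏ t, π (i t) (j t)) * (b l (j s) * p i * q (Function.update j s l)) := by
    calc (∑ i : Fin k → Fin N, ∑ j : Fin k → Fin N, (∏ t, π (i t) (j t)) *
        (p i * (∑ s : Fin k, ∑ l, b l (j s) * q (Function.update j s l))))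
        = ∑ i : Fin k → Fin N, ∑ j : Fin k → Fin N, ∑ s : Fin k, ∑ l : Fin N,
          (∏ t, π (i t) (j t)) * (b l (j s) * p i * q (Function.update j s l)) := by
          refine Finset.sum_congr rfl fun i _ => Finset.sum_congr rfl fun j _ => ?_
          rw [Finset.mul_sum, Finset.mul_sum]
          refine Finset.sum_congr rfl fun s _ => ?_
          rw [Finset.mul_sum, Finset.mul_sum]
          all_goals exact Finset.sum_congr rfl fun l _ => by ring
      _ = ∑ i : Fin k → Fin N, ∑ s : Fin k, ∑ j : Fin k → Fin N, ∑ l : Fin N,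
          (∏ t, π (i t) (j t)) * (b l (j s) * p i * q (Function.update j s l)) :=
          Finset.sum_congr rfl fun i _ => Finset.sum_comm
      _ = ∑ s : Fin k, ∑ i : Fin k → Fin N, ∑ j : Fin k → Fin N, ∑ l : Fin N,
          (∏ t, π (i t) (j t)) * (b l (j s) * p i * q (Function.update j s l)) :=
          Finset.sum_comm
  rw [flat1, flat2, ← Finset.sum_add_distrib, Finset.sum_congr rfl fun s _ => key s,
    Finset.sum_const, Finset.card_univ, Fintype.card_fin, nsmul_eq_mul]

private lemma moyalTerm_apply {π : Matrix (Fin N) (Fin N) ℂ} (k : ℕ) (f g : SmFn N)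
    (x : Fin N → ℝ) :
    moyalTerm xDf π k f g x = ((-Complex.I / 2) ^ k / (Nat.factorial k : ℂ)) *
      ∑ i : Fin k → Fin N, ∑ j : Fin k → Fin N,
        (∏ t, π (i t) (j t)) * (iterD xDf i f x * iterD xDf j g x) := by
  simp [moyalTerm, Finset.sum_apply, Pi.smul_apply, smul_eq_mul, Finset.mul_sum]

private lemma moyalTerm_smooth {π : Matrix (Fin N) (Fin N) ℂ} (k : ℕ) {f g : SmFn N}
    (hf : ContDiff ℝ (⊤:ℕ∞) f) (hg : ContDiff ℝ (⊤:ℕ∞) g) :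
    ContDiff ℝ (⊤:ℕ∞) (moyalTerm xDf π k f g) := by
  have : moyalTerm xDf π k f g = fun x => ((-Complex.I / 2) ^ k / (Nat.factorial k : ℂ)) *
      ∑ i : Fin k → Fin N, ∑ j : Fin k → Fin N,
        (∏ t, π (i t) (j t)) * (iterD xDf i f x * iterD xDf j g x) :=
    funext fun x => moyalTerm_apply k f g x
  rw [this]
  exact contDiff_const.mul <| ContDiff.sum fun i _ => ContDiff.sum fun j _ =>
    contDiff_const.mul ((iterD_smooth hf i).mul (iterD_smooth hg j))

private lemma XAct_moyalTerm {X : Fin N → SmFn N} (hX : ∀ j, ContDiff ℝ (⊤:ℕ∞) (X j))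
    {π : Matrix (Fin N) (Fin N) ℂ} (k : ℕ) {f g : SmFn N}
    (hf : ContDiff ℝ (⊤:ℕ∞) f) (hg : ContDiff ℝ (⊤:ℕ∞) g) (x : Fin N → ℝ) :
    XAct X (moyalTerm xDf π k f g) x = ((-Complex.I / 2) ^ k / (Nat.factorial k : ℂ)) *
      ∑ i : Fin k → Fin N, ∑ j : Fin k → Fin N,
        (∏ t, π (i t) (j t)) * (XAct X (iterD xDf i f) x * iterD xDf j g x
          + iterD xDf i f x * XAct X (iterD xDf j g) x) := by
  have hdP : ∀ (i : Fin k → Fin N) (y : Fin N → ℝ), DifferentiableAt ℝ (iterD xDf i f) y :=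
    fun i y => cdtop (iterD_smooth hf i) y
  have hdQ : ∀ (j : Fin k → Fin N) (y : Fin N → ℝ), DifferentiableAt ℝ (iterD xDf j g) y :=
    fun j y => cdtop (iterD_smooth hg j) y
  have hxD : ∀ (j0 : Fin N), xDf j0 (moyalTerm xDf π k f g) x
      = ((-Complex.I / 2) ^ k / (Nat.factorial k : ℂ)) *
        ∑ i : Fin k → Fin N, ∑ j : Fin k → Fin N,
          (∏ t, π (i t) (j t)) * (xDf j0 (iterD xDf i f) x * iterD xDf j g x
            + iterD xDf i f x * xDf j0 (iterD xDf j g) x) := by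
    intro j0
    have hmt : moyalTerm xDf π k f g = fun y =>
        ((-Complex.I / 2) ^ k / (Nat.factorial k : ℂ)) *
        ∑ i : Fin k → Fin N, ∑ j : Fin k → Fin N,
          (∏ t, π (i t) (j t)) * (iterD xDf i f y * iterD xDf j g y) :=
      funext fun y => moyalTerm_apply k f g y
    rw [hmt, xDf_const_mul (by
      exact DifferentiableAt.fun_sum fun i _ => DifferentiableAt.fun_sum fun j _ =>
        (differentiableAt_const _).mul ((hdP i x).mul (hdQ j x)))]
    congr 1
    rw [xDf_fun_sum _ _ (fun i _ => DifferentiableAt.fun_sum fun j _ =>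
      (differentiableAt_const _).fun_mul ((hdP i x).fun_mul (hdQ j x)))]
    refine Finset.sum_congr rfl fun i _ => ?_
    rw [xDf_fun_sum _ _ (fun j _ => (differentiableAt_const _).fun_mul ((hdP i x).fun_mul (hdQ j x)))]
    refine Finset.sum_congr rfl fun j _ => ?_
    rw [show (fun y => (∏ t, π (i t) (j t)) * (iterD xDf i f y * iterD xDf j g y))
        = fun y => (∏ t, π (i t) (j t)) * ((fun z => iterD xDf i f z * iterD xDf j g z) y) from rfl]
    rw [xDf_const_mul ((hdP i x).fun_mul (hdQ j x)), xDf_fun_mul (hdP i x) (hdQ j x)]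
  show (∑ j0, X j0 x * xDf j0 (moyalTerm xDf π k f g) x) = _
  rw [Finset.sum_congr rfl fun j0 (_ : j0 ∈ Finset.univ) => by rw [hxD j0]]
  calc (∑ j0, X j0 x * (((-Complex.I / 2) ^ k / (Nat.factorial k : ℂ)) *
        ∑ i : Fin k → Fin N, ∑ j : Fin k → Fin N,
          (∏ t, π (i t) (j t)) * (xDf j0 (iterD xDf i f) x * iterD xDf j g x
            + iterD xDf i f x * xDf j0 (iterD xDf j g) x)))
      = ∑ j0, ∑ i : Fin k → Fin N, ∑ j : Fin k → Fin N,
          ((-Complex.I / 2) ^ k / (Nat.factorial k : ℂ)) *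
          ((∏ t, π (i t) (j t)) * (X j0 x * (xDf j0 (iterD xDf i f) x * iterD xDf j g x
            + iterD xDf i f x * xDf j0 (iterD xDf j g) x))) := by
        refine Finset.sum_congr rfl fun j0 _ => ?_
        rw [Finset.mul_sum, Finset.mul_sum]
        refine Finset.sum_congr rfl fun i _ => ?_
        rw [Finset.mul_sum, Finset.mul_sum]
        exact Finset.sum_congr rfl fun j _ => by ring
    _ = ∑ i : Fin k → Fin N, ∑ j0, ∑ j : Fin k → Fin N,
          ((-Complex.I / 2) ^ k / (Nat.factorial k : ℂ)) *
          ((∏ t, π (i t) (j t)) * (X j0 x * (xDf j0 (iterD xDf i f) x * iterD xDf j g x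
            + iterD xDf i f x * xDf j0 (iterD xDf j g) x))) := Finset.sum_comm
    _ = ∑ i : Fin k → Fin N, ∑ j : Fin k → Fin N, ∑ j0,
          ((-Complex.I / 2) ^ k / (Nat.factorial k : ℂ)) *
          ((∏ t, π (i t) (j t)) * (X j0 x * (xDf j0 (iterD xDf i f) x * iterD xDf j g x
            + iterD xDf i f x * xDf j0 (iterD xDf j g) x))) :=
        Finset.sum_congr rfl fun i _ => Finset.sum_comm
    _ = ((-Complex.I / 2) ^ k / (Nat.factorial k : ℂ)) *
        ∑ i : Fin k → Fin N, ∑ j : Fin k → Fin N,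
          (∏ t, π (i t) (j t)) * (XAct X (iterD xDf i f) x * iterD xDf j g x
            + iterD xDf i f x * XAct X (iterD xDf j g) x) := by
        have hswap : ∀ (c w P Q : ℂ) (Xv u v : Fin N → ℂ),
            (∑ j0, c * (w * (Xv j0 * (u j0 * Q + P * v j0))))
              = c * (w * ((∑ j0, Xv j0 * u j0) * Q + P * (∑ j0, Xv j0 * v j0))) := by
          intro c w P Q Xv u v
          rw [Finset.sum_mul, Finset.mul_sum, ← Finset.sum_add_distrib, Finset.mul_sum,
            Finset.mul_sum]
          exact Finset.sum_congr rfl fun j0 _ => by ring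
        rw [Finset.mul_sum]
        refine Finset.sum_congr rfl fun i _ => ?_
        rw [Finset.mul_sum]
        refine Finset.sum_congr rfl fun j _ => ?_
        exact hswap ((-Complex.I / 2) ^ k / (Nat.factorial k : ℂ)) (∏ t, π (i t) (j t))
          (iterD xDf i f x) (iterD xDf j g x) (fun j0 => X j0 x)
          (fun j0 => xDf j0 (iterD xDf i f) x) (fun j0 => xDf j0 (iterD xDf j g) x)

private lemma key_moyalTerm {X : Fin N → SmFn N} {b : Matrix (Fin N) (Fin N) ℂ}
    (hX : ∀ j, ContDiff ℝ (⊤:ℕ∞) (X j)) (hXd : ∀ j k x, xDf k (X j) x = b j k)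
    {π : Matrix (Fin N) (Fin N) ℂ}
    (hL : ∀ u v : Fin N, (∑ l, (π l v * b u l + π u l * b v l)) = π u v)
    (k : ℕ) {f g : SmFn N}
    (hf : ContDiff ℝ (⊤:ℕ∞) f) (hg : ContDiff ℝ (⊤:ℕ∞) g) (x : Fin N → ℝ) :
    moyalTerm xDf π k (XAct X f) g x + moyalTerm xDf π k f (XAct X g) x
      = XAct X (moyalTerm xDf π k f g) x + (k : ℂ) * moyalTerm xDf π k f g x := by
  have hcorr := correction (k := k) π b hL (fun v : Fin k → Fin N => iterD xDf v f x)
    (fun v : Fin k → Fin N => iterD xDf v g x)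
  rw [moyalTerm_apply, moyalTerm_apply, moyalTerm_apply, XAct_moyalTerm hX k hf hg x]
  have hLf : (∑ i : Fin k → Fin N, ∑ j : Fin k → Fin N,
        (∏ t, π (i t) (j t)) * (iterD xDf i (XAct X f) x * iterD xDf j g x))
      = (∑ i : Fin k → Fin N, ∑ j : Fin k → Fin N,
          (∏ t, π (i t) (j t)) * (XAct X (iterD xDf i f) x * iterD xDf j g x))
        + (∑ i : Fin k → Fin N, ∑ j : Fin k → Fin N, (∏ t, π (i t) (j t)) *
            ((∑ s : Fin k, ∑ l, b l (i s) * iterD xDf (Function.update i s l) f x)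
              * iterD xDf j g x)) := by
    rw [← Finset.sum_add_distrib]
    refine Finset.sum_congr rfl fun i _ => ?_
    rw [← Finset.sum_add_distrib]
    refine Finset.sum_congr rfl fun j _ => ?_
    rw [comm_iterD hX hXd i hf x]
    ring
  have hLg : (∑ i : Fin k → Fin N, ∑ j : Fin k → Fin N,
        (∏ t, π (i t) (j t)) * (iterD xDf i f x * iterD xDf j (XAct X g) x))
      = (∑ i : Fin k → Fin N, ∑ j : Fin k → Fin N,
          (∏ t, π (i t) (j t)) * (iterD xDf i f x * XAct X (iterD xDf j g) x))
        + (∑ i : Fin k → Fin N, ∑ j : Fin k → Fin N, (∏ t, π (i t) (j t)) *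
            (iterD xDf i f x *
              (∑ s : Fin k, ∑ l, b l (j s) * iterD xDf (Function.update j s l) g x))) := by
    rw [← Finset.sum_add_distrib]
    refine Finset.sum_congr rfl fun i _ => ?_
    rw [← Finset.sum_add_distrib]
    refine Finset.sum_congr rfl fun j _ => ?_
    rw [comm_iterD hX hXd j hg x]
    ring
  have hsplit : (∑ i : Fin k → Fin N, ∑ j : Fin k → Fin N,
        (∏ t, π (i t) (j t)) * (XAct X (iterD xDf i f) x * iterD xDf j g x
          + iterD xDf i f x * XAct X (iterD xDf j g) x))
      = (∑ i : Fin k → Fin N, ∑ j : Fin k → Fin N,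
          (∏ t, π (i t) (j t)) * (XAct X (iterD xDf i f) x * iterD xDf j g x))
        + (∑ i : Fin k → Fin N, ∑ j : Fin k → Fin N,
            (∏ t, π (i t) (j t)) * (iterD xDf i f x * XAct X (iterD xDf j g) x)) := by
    rw [← Finset.sum_add_distrib]
    refine Finset.sum_congr rfl fun i _ => ?_
    rw [← Finset.sum_add_distrib]
    exact Finset.sum_congr rfl fun j _ => by ring
  rw [hLf, hLg, hsplit]
  linear_combination ((-Complex.I / 2) ^ k / (Nat.factorial k : ℂ)) * hcorr

private lemma XAct_fun_sum {X : Fin N → SmFn N} {ι : Type*} (s : Finset ι) (f : ι → SmFn N)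
    {x : Fin N → ℝ} (hf : ∀ a ∈ s, DifferentiableAt ℝ (f a) x) :
    XAct X (fun y => ∑ a ∈ s, f a y) x = ∑ a ∈ s, XAct X (f a) x := by
  show (∑ j, X j x * xDf j (fun y => ∑ a ∈ s, f a y) x) = _
  calc (∑ j, X j x * xDf j (fun y => ∑ a ∈ s, f a y) x)
      = ∑ j, ∑ a ∈ s, X j x * xDf j (f a) x := by
        refine Finset.sum_congr rfl fun j _ => ?_
        rw [xDf_fun_sum s f hf j, Finset.mul_sum]
    _ = ∑ a ∈ s, ∑ j, X j x * xDf j (f a) x := Finset.sum_comm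
    _ = ∑ a ∈ s, XAct X (f a) x := rfl

private lemma iterD_lin :
    ∀ {k : ℕ} (v : Fin k → Fin N) {f1 f2 : SmFn N} (_ : ContDiff ℝ (⊤:ℕ∞) f1)
      (_ : ContDiff ℝ (⊤:ℕ∞) f2) (c : ℂ) (x : Fin N → ℝ),
      iterD xDf v (fun y => c * f1 y + f2 y) x = c * iterD xDf v f1 x + iterD xDf v f2 x := by
  intro k
  induction k with
  | zero => intro v f1 f2 _ _ c x; rfl
  | succ k ih =>
    intro v f1 f2 hf1 hf2 c x
    rw [iterD_succ]
    have htail : iterD xDf (fun t : Fin k => v t.succ) (fun y => c * f1 y + f2 y)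
        = fun y => c * iterD xDf (fun t : Fin k => v t.succ) f1 y
            + iterD xDf (fun t : Fin k => v t.succ) f2 y :=
      funext fun y => ih (fun t => v t.succ) hf1 hf2 c y
    rw [htail, xDf_fun_add ((cdtop (iterD_smooth hf1 _) x).const_mul c)
        (cdtop (iterD_smooth hf2 _) x),
      xDf_const_mul (cdtop (iterD_smooth hf1 _) x)]
    rfl

private lemma moyalTerm_left_lin {π : Matrix (Fin N) (Fin N) ℂ} (k : ℕ) (c : ℂ)
    {f1 f2 g : SmFn N} (hf1 : ContDiff ℝ (⊤:ℕ∞) f1) (hf2 : ContDiff ℝ (⊤:ℕ∞) f2)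
    (x : Fin N → ℝ) :
    moyalTerm xDf π k (fun y => c * f1 y + f2 y) g x
      = c * moyalTerm xDf π k f1 g x + moyalTerm xDf π k f2 g x := by
  rw [moyalTerm_apply, moyalTerm_apply, moyalTerm_apply]
  have h : (∑ i : Fin k → Fin N, ∑ j : Fin k → Fin N,
        (∏ t, π (i t) (j t)) * (iterD xDf i (fun y => c * f1 y + f2 y) x * iterD xDf j g x))
      = c * (∑ i : Fin k → Fin N, ∑ j : Fin k → Fin N,
            (∏ t, π (i t) (j t)) * (iterD xDf i f1 x * iterD xDf j g x))
        + (∑ i : Fin k → Fin N, ∑ j : Fin k → Fin N,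
            (∏ t, π (i t) (j t)) * (iterD xDf i f2 x * iterD xDf j g x)) := by
    rw [Finset.mul_sum, ← Finset.sum_add_distrib]
    refine Finset.sum_congr rfl fun i _ => ?_
    rw [Finset.mul_sum, ← Finset.sum_add_distrib]
    refine Finset.sum_congr rfl fun j _ => ?_
    rw [iterD_lin i hf1 hf2 c x]
    ring
  rw [h]
  ring

private lemma moyalTerm_right_lin {π : Matrix (Fin N) (Fin N) ℂ} (k : ℕ) (c : ℂ)
    {f g1 g2 : SmFn N} (hg1 : ContDiff ℝ (⊤:ℕ∞) g1) (hg2 : ContDiff ℝ (⊤:ℕ∞) g2)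
    (x : Fin N → ℝ) :
    moyalTerm xDf π k f (fun y => c * g1 y + g2 y) x
      = c * moyalTerm xDf π k f g1 x + moyalTerm xDf π k f g2 x := by
  rw [moyalTerm_apply, moyalTerm_apply, moyalTerm_apply]
  have h : (∑ i : Fin k → Fin N, ∑ j : Fin k → Fin N,
        (∏ t, π (i t) (j t)) * (iterD xDf i f x * iterD xDf j (fun y => c * g1 y + g2 y) x))
      = c * (∑ i : Fin k → Fin N, ∑ j : Fin k → Fin N,
            (∏ t, π (i t) (j t)) * (iterD xDf i f x * iterD xDf j g1 x))
        + (∑ i : Fin k → Fin N, ∑ j : Fin k → Fin N,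
            (∏ t, π (i t) (j t)) * (iterD xDf i f x * iterD xDf j g2 x)) := by
    rw [Finset.mul_sum, ← Finset.sum_add_distrib]
    refine Finset.sum_congr rfl fun i _ => ?_
    rw [Finset.mul_sum, ← Finset.sum_add_distrib]
    refine Finset.sum_congr rfl fun j _ => ?_
    rw [iterD_lin j hg1 hg2 c x]
    ring
  rw [h]
  ring

end AuxDerivation

/-- If `X = Σ X^j ∂_j` has affine coefficients and rescales the
constant antisymmetric Poisson matrix `π`, i.e.
`Σ_l (π^{lk} ∂_l X^j + π^{jl} ∂_l X^k) = π^{jk}`, then `ℏ∂_ℏ + X` is a quantum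
Liouville operator: a derivation of the Moyal star-product. -/
theorem affine_liouville_is_derivation (n : ℕ)
    (π : Matrix (Fin (2 * n)) (Fin (2 * n)) ℂ) (hskew : ∀ i j, π j i = -π i j)
    (X : Fin (2 * n) → SmFn (2 * n))
    (haff : ∃ (a : Fin (2 * n) → ℂ) (b : Matrix (Fin (2 * n)) (Fin (2 * n)) ℂ),
      ∀ j x, X j x = a j + ∑ k, b j k * (x k : ℂ))
    (hLiou : ∀ j k x,
      (∑ l, (π l k * xDf l (X j) x + π j l * xDf l (X k) x)) = π j k) :
    ∀ F G : SmSer (2 * n), SmSer.Smooth F → SmSer.Smooth G →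
      LOp X (fMul π F G) = fMul π (LOp X F) G + fMul π F (LOp X G) := by
  classical
  obtain ⟨a, b, hXb⟩ := haff
  have hXs : ∀ j, ContDiff ℝ (⊤:ℕ∞) (X j) := by
    intro j
    have hj : X j = fun x => a j + ∑ k, b j k * ((x k : ℝ) : ℂ) := funext fun x => hXb j x
    rw [hj]
    refine contDiff_const.add (ContDiff.sum fun k _ => contDiff_const.mul ?_)
    exact Complex.ofRealCLM.contDiff.comp (contDiff_apply ℝ ℝ k)
  have hXd : ∀ j k x, xDf k (X j) x = b j k := by
    intro j kk x
    have hfd : HasFDerivAt (X j)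
        (∑ k, b j k • (Complex.ofRealCLM.comp (ContinuousLinearMap.proj k :
          (Fin (2*n) → ℝ) →L[ℝ] ℝ))) x := by
      have hj : X j = fun x => a j + ∑ k, b j k * ((x k : ℝ) : ℂ) := funext fun x => hXb j x
      rw [hj]
      refine HasFDerivAt.const_add (a j) ?_
      refine HasFDerivAt.fun_sum fun k _ => ?_
      exact ((Complex.ofRealCLM.comp (ContinuousLinearMap.proj k :
        (Fin (2*n) → ℝ) →L[ℝ] ℝ)).hasFDerivAt).const_mul (b j k)
    show fderiv ℝ (X j) x (Pi.single kk 1) = b j kk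
    rw [hfd.fderiv]
    simp [ContinuousLinearMap.sum_apply, Pi.single_apply, apply_ite (Complex.ofReal ·),
      mul_ite, mul_one, mul_zero, Finset.sum_ite_eq']
  have hLb : ∀ u v : Fin (2*n), (∑ l, (π l v * b u l + π u l * b v l)) = π u v := by
    intro u v
    have h := hLiou u v (fun _ => 0)
    simpa only [hXd] using h
  intro F G hF hG
  funext m x
  have Tsm : ∀ (k l : ℕ), ContDiff ℝ (⊤:ℕ∞) (moyalTerm xDf π k (F l) (G (m - k - l))) :=
    fun k l => moyalTerm_smooth k (hF l) (hG _)
  show (m:ℂ) * fMul π F G m x + XAct X (fMul π F G m) x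
      = fMul π (LOp X F) G m x + fMul π F (LOp X G) m x
  have happ : ∀ (H K : SmSer (2*n)), fMul π H K m x
      = ∑ k ∈ Finset.range (m+1), ∑ l ∈ Finset.range (m - k + 1),
          moyalTerm xDf π k (H l) (K (m - k - l)) x := by
    intro H K
    simp [fMul, moyalN, Finset.sum_apply]
  have hXA : XAct X (fMul π F G m) x = ∑ k ∈ Finset.range (m+1), ∑ l ∈ Finset.range (m-k+1),
      XAct X (moyalTerm xDf π k (F l) (G (m - k - l))) x := by
    have h1 : fMul π F G m = fun y => ∑ k ∈ Finset.range (m+1), ∑ l ∈ Finset.range (m-k+1),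
        moyalTerm xDf π k (F l) (G (m - k - l)) y := by
      funext y
      simp [fMul, moyalN, Finset.sum_apply]
    rw [h1, XAct_fun_sum _ _ (fun k _ => DifferentiableAt.fun_sum fun l _ => cdtop (Tsm k l) x)]
    exact Finset.sum_congr rfl fun k _ =>
      XAct_fun_sum _ _ (fun l _ => cdtop (Tsm k l) x)
  rw [happ F G, hXA, happ (LOp X F) G, happ F (LOp X G), Finset.mul_sum,
    ← Finset.sum_add_distrib, ← Finset.sum_add_distrib]
  refine Finset.sum_congr rfl fun k hk => ?_
  rw [Finset.mul_sum, ← Finset.sum_add_distrib, ← Finset.sum_add_distrib]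
  refine Finset.sum_congr rfl fun l hl => ?_
  have hk' : k ≤ m := Finset.mem_range_succ_iff.mp hk
  have hl' : l ≤ m - k := Finset.mem_range_succ_iff.mp hl
  have harith : ((l:ℂ)) + ((m - k - l : ℕ):ℂ) + (k:ℂ) = (m:ℂ) := by
    have h' : l + (m - k - l) + k = m := by omega
    exact_mod_cast congrArg (Nat.cast : ℕ → ℂ) h'
  have e1 : moyalTerm xDf π k (LOp X F l) (G (m - k - l)) x
      = (l:ℂ) * moyalTerm xDf π k (F l) (G (m - k - l)) x
        + moyalTerm xDf π k (XAct X (F l)) (G (m - k - l)) x :=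
    moyalTerm_left_lin k (l:ℂ) (hF l) (XAct_smooth hXs (hF l)) x
  have e2 : moyalTerm xDf π k (F l) (LOp X G (m - k - l)) x
      = ((m - k - l : ℕ):ℂ) * moyalTerm xDf π k (F l) (G (m - k - l)) x
        + moyalTerm xDf π k (F l) (XAct X (G (m - k - l))) x :=
    moyalTerm_right_lin k _ (hG (m - k - l)) (XAct_smooth hXs (hG (m - k - l))) x
  have hkey := key_moyalTerm hXs hXd hLb k (hF l) (hG (m - k - l)) x
  rw [e1, e2]
  linear_combination -hkey - moyalTerm xDf π k (F l) (G (m - k - l)) x * harith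


end StarPaper
end
end
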